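/- For positive parameters with σ, θ ∈ [0,1], the quantity I* = (R0 − 1)/[(1 + σω/(μ+δ2))·(1 − ρξ(1-σ)(1-θ)ω/((μ+δ3+ρ)(μ+ξ)(μ+ω+δ1)))] is well defined (the second factor in the denominator is strictly positive) and satisfies I* > 0 if and only if R0 > 1; hence the endemic equilibrium E* of model (1) with q = 0 exists if and only if R0 > 1. -/
import Mathlib


open Set

/-- I* is well defined (the second factor of its denominator is positive) and
I* > 0 iff R0 > 1; hence the endemic equilibrium of model (1) with q = 0 exists
iff R0 > 1. -/
theorem endemic_equilibrium_exists_iff_R0_gt_one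
    (Λ β μ ω ρ ξ δ1 δ2 δ3 p σ θ : ℝ)
    (hΛ : 0 < Λ) (hβ : 0 < β) (hμ : 0 < μ) (hω : 0 < ω) (hρ : 0 < ρ)
    (hξ : 0 < ξ) (hδ1 : 0 < δ1) (hδ2 : 0 < δ2) (hδ3 : 0 < δ3)
    (hp : p ∈ Ico (0:ℝ) 1) (hσ : σ ∈ Icc (0:ℝ) 1) (hθ : θ ∈ Icc (0:ℝ) 1)
    (R0 Istar : ℝ)
    (hR0 : R0 = β * Λ * (μ * (1 - p) + ξ) / (μ * (μ + ξ) * (μ + ω + δ1))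
        * (1 + σ * ω / (μ + δ2)))
    (hIstar : Istar = (R0 - 1) / ((1 + σ * ω / (μ + δ2))
        * (1 - ρ * ξ * (1 - σ) * (1 - θ) * ω
            / ((μ + δ3 + ρ) * (μ + ξ) * (μ + ω + δ1))))) :
    0 < 1 - ρ * ξ * (1 - σ) * (1 - θ) * ω / ((μ + δ3 + ρ) * (μ + ξ) * (μ + ω + δ1))
      ∧ (0 < Istar ↔ 1 < R0) := by
  obtain ⟨hσ0, hσ1⟩ := hσ
  obtain ⟨hθ0, hθ1⟩ := hθ
  have hD : 0 < (μ + δ3 + ρ) * (μ + ξ) * (μ + ω + δ1) := by positivity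
  have hnum : ρ * ξ * (1 - σ) * (1 - θ) * ω < (μ + δ3 + ρ) * (μ + ξ) * (μ + ω + δ1) := by
    have h1 : ρ * ξ * (1 - σ) * (1 - θ) * ω ≤ ρ * ξ * ω := by
      have hst : (1 - σ) * (1 - θ) ≤ 1 := by nlinarith
      calc ρ * ξ * (1 - σ) * (1 - θ) * ω = ρ * ξ * ω * ((1 - σ) * (1 - θ)) := by ring
        _ ≤ ρ * ξ * ω * 1 :=
            mul_le_mul_of_nonneg_left hst (by positivity)
        _ = ρ * ξ * ω := by ring
    have h2 : ρ * ξ * ω < (μ + δ3 + ρ) * (μ + ξ) * (μ + ω + δ1) := by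
      have a : ρ < μ + δ3 + ρ := by linarith
      have b : ξ < μ + ξ := by linarith
      have c : ω < μ + ω + δ1 := by linarith
      calc ρ * ξ * ω < (μ + δ3 + ρ) * ξ * ω := by
            apply mul_lt_mul_of_pos_right (mul_lt_mul_of_pos_right a hξ) hω
        _ < (μ + δ3 + ρ) * (μ + ξ) * ω := by
            apply mul_lt_mul_of_pos_right (mul_lt_mul_of_pos_left b (by linarith)) hω
        _ < (μ + δ3 + ρ) * (μ + ξ) * (μ + ω + δ1) := by
            apply mul_lt_mul_of_pos_left c (by positivity)
    linarith
  have h1 : 0 < 1 - ρ * ξ * (1 - σ) * (1 - θ) * ω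
      / ((μ + δ3 + ρ) * (μ + ξ) * (μ + ω + δ1)) := by
    rw [sub_pos, div_lt_one hD]; exact hnum
  refine ⟨h1, ?_⟩
  have h2 : 0 < 1 + σ * ω / (μ + δ2) := by positivity
  have hK : 0 < (1 + σ * ω / (μ + δ2))
      * (1 - ρ * ξ * (1 - σ) * (1 - θ) * ω
          / ((μ + δ3 + ρ) * (μ + ξ) * (μ + ω + δ1))) := mul_pos h2 h1
  rw [hIstar, div_pos_iff]
  constructor
  · rintro (⟨h, _⟩ | ⟨_, h⟩)
    · linarith
    · linarith
  · intro h
    exact Or.inl ⟨by linarith, hK⟩
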